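/- Let G=(V,A) be a directed graph with nonnegative arc weights and let u, v, w be three distinct vertices. Let P_v be a shortest path from u to v, and let x be the first vertex encountered on P_v after u. If there is a shortest path P_w from u to w that shares a common vertex other than u with P_v, then there is a shortest path P_w' from u to w that contains x. -/

import Mathlib

/-- `IsDiPath A a b p` asserts that the list of vertices `p` is a simple directed
path from `a` to `b` in the directed graph with arc relation `A`. -/
def IsDiPath {V : Type*} (A : V → V → Prop) (a b : V) (p : List V) : Prop :=
  p.head? = some a ∧ p.getLast? = some b ∧ List.Chain' A p ∧ p.Nodup

/-- The arcs traversed by a path: the list of consecutive pairs of vertices. -/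
def pathArcs {V : Type*} (p : List V) : List (V × V) :=
  p.zip p.tail

/-- The total weight of a path: the sum of the weights of its arcs. -/
def pathWeight {V : Type*} (w : V → V → ℝ) (p : List V) : ℝ :=
  ((p.zip p.tail).map fun e => w e.1 e.2).sum

/-- `p` is a shortest (minimum total weight) directed path from `a` to `b`. -/
def IsShortestDiPath {V : Type*} (A : V → V → Prop) (w : V → V → ℝ) (a b : V)
    (p : List V) : Prop :=
  IsDiPath A a b p ∧ ∀ q, IsDiPath A a b q → pathWeight w p ≤ pathWeight w q

lemma pathWeight_cons_cons {V : Type*} (w : V → V → ℝ) (a b : V) (l : List V) :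
    pathWeight w (a :: b :: l) = w a b + pathWeight w (b :: l) := by
  simp [pathWeight]

lemma pathWeight_split {V : Type*} (w : V → V → ℝ) (a : V) :
    ∀ (p q : List V), pathWeight w (p ++ a :: q) = pathWeight w (p ++ [a]) + pathWeight w (a :: q)
  | [], q => by simp [pathWeight]
  | [b], q => by simp [pathWeight_cons_cons]; simp [pathWeight]
  | b :: c :: p, q => by
    have := pathWeight_split w a (c :: p) q
    simp only [List.cons_append, pathWeight_cons_cons] at *
    rw [this]; ring

lemma pathWeight_nonneg {V : Type*} {A : V → V → Prop} {w : V → V → ℝ}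
    (hw : ∀ x y, A x y → 0 ≤ w x y) :
    ∀ {p : List V}, List.Chain' A p → 0 ≤ pathWeight w p
  | [], _ => le_of_eq rfl
  | [a], _ => le_of_eq rfl
  | a :: b :: l, h => by
    rw [pathWeight_cons_cons]
    have h1 := List.isChain_cons_cons.mp h
    exact add_nonneg (hw _ _ h1.1) (pathWeight_nonneg hw h1.2)

lemma exists_dup_split {V : Type*} :
    ∀ {p : List V}, ¬ p.Nodup → ∃ (z : V) (s m e : List V), p = s ++ z :: (m ++ z :: e)
  | [], h => absurd List.nodup_nil h
  | a :: l, h => by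
    by_cases ha : a ∈ l
    · obtain ⟨m, e, rfl⟩ := List.append_of_mem ha
      exact ⟨a, [], m, e, rfl⟩
    · have hl : ¬ l.Nodup := fun hn => h (List.nodup_cons.mpr ⟨ha, hn⟩)
      obtain ⟨z, s, m, e, rfl⟩ := exists_dup_split hl
      exact ⟨z, a :: s, m, e, rfl⟩

lemma getLast?_append_cons {V : Type*} (l : List V) (z : V) (e : List V) :
    (l ++ z :: e).getLast? = (z :: e).getLast? := by
  rw [List.getLast?_append]
  obtain ⟨b, hb⟩ := Option.isSome_iff_exists.mp
    (List.getLast?_isSome.mpr (List.cons_ne_nil z e))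
  rw [hb]; rfl

lemma chain'_glue {V : Type*} {A : V → V → Prop} {l : List V} {z : V} {e : List V}
    (h1 : List.Chain' A (l ++ [z])) (h2 : List.Chain' A (z :: e)) :
    List.Chain' A (l ++ z :: e) := by
  have heq : l ++ z :: e = (l ++ [z]) ++ e := by simp
  rw [heq]; apply List.isChain_append.mpr
  refine ⟨h1, (List.isChain_cons.mp h2).2, ?_⟩
  intro a ha b hb
  have : a = z := by
    rw [List.getLast?_append] at ha
    simp at ha; exact ha.symm
  subst this
  exact (List.isChain_cons.mp h2).1 b hb

lemma loop_erase {V : Type*} {A : V → V → Prop} {w : V → V → ℝ}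
    (hw : ∀ x y, A x y → 0 ≤ w x y) :
    ∀ (n : ℕ) (p : List V), p.length ≤ n → List.Chain' A p →
      ∃ q : List V, q.head? = p.head? ∧ q.getLast? = p.getLast? ∧
        List.Chain' A q ∧ q.Nodup ∧ pathWeight w q ≤ pathWeight w p := by
  intro n
  induction n with
  | zero =>
    intro p hp _
    have : p = [] := List.length_eq_zero_iff.mp (Nat.le_zero.mp hp)
    subst this
    exact ⟨[], rfl, rfl, List.isChain_nil, List.nodup_nil, le_refl _⟩
  | succ n ih =>
    intro p hp hc
    by_cases hnd : p.Nodup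
    · exact ⟨p, rfl, rfl, hc, hnd, le_refl _⟩
    · obtain ⟨z, s, m, e, rfl⟩ := exists_dup_split hnd
      have hlen : (s ++ z :: e).length ≤ n := by
        simp only [List.length_append, List.length_cons] at hp ⊢
        omega
      have hpre : List.Chain' A (s ++ [z]) :=
        hc.prefix ⟨m ++ z :: e, by simp⟩
      have hsuf : List.Chain' A (z :: e) :=
        hc.suffix ⟨s ++ z :: m, by simp⟩
      have hmid : List.Chain' A (z :: (m ++ [z])) := by
        refine hc.infix ⟨s, e, ?_⟩
        simp
      have hq0chain : List.Chain' A (s ++ z :: e) := chain'_glue hpre hsuf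
      have A1 : pathWeight w (s ++ z :: (m ++ z :: e)) =
          pathWeight w (s ++ [z]) + pathWeight w (z :: (m ++ z :: e)) :=
        pathWeight_split w z s (m ++ z :: e)
      have A2 : pathWeight w ((z :: m) ++ z :: e) =
          pathWeight w ((z :: m) ++ [z]) + pathWeight w (z :: e) :=
        pathWeight_split w z (z :: m) e
      have hw1 : pathWeight w (s ++ z :: (m ++ z :: e)) = pathWeight w (s ++ [z])
          + pathWeight w (z :: (m ++ [z])) + pathWeight w (z :: e) := by
        rw [A1, show (z :: (m ++ z :: e)) = (z :: m) ++ z :: e from rfl, A2,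
          show ((z :: m) ++ [z]) = z :: (m ++ [z]) from rfl, add_assoc]
      have hw2 : pathWeight w (s ++ z :: e) = pathWeight w (s ++ [z]) + pathWeight w (z :: e) :=
        pathWeight_split w z s e
      have hle : pathWeight w (s ++ z :: e) ≤ pathWeight w (s ++ z :: (m ++ z :: e)) := by
        rw [hw1, hw2]
        have := pathWeight_nonneg hw hmid
        linarith
      have hhead : (s ++ z :: e).head? = (s ++ z :: (m ++ z :: e)).head? := by
        rw [List.head?_append, List.head?_append]; rfl
      have hlast : (s ++ z :: e).getLast? = (s ++ z :: (m ++ z :: e)).getLast? := by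
        rw [getLast?_append_cons, getLast?_append_cons,
          show (z :: (m ++ z :: e)) = (z :: m) ++ z :: e from rfl, getLast?_append_cons]
      obtain ⟨q, h1, h2, h3, h4, h5⟩ := ih (s ++ z :: e) hlen hq0chain
      exact ⟨q, h1.trans hhead, h2.trans hlast, h3, h4, h5.trans hle⟩

lemma first_mem_split {V : Type*} (S : V → Prop) :
    ∀ (l : List V), (∃ z ∈ l, S z) →
      ∃ (s : List V) (y : V) (e : List V), l = s ++ y :: e ∧ S y ∧ ∀ z ∈ s, ¬ S z
  | [], h => by simp at h
  | a :: l, h => by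
    by_cases ha : S a
    · exact ⟨[], a, l, rfl, ha, by simp⟩
    · have : ∃ z ∈ l, S z := by
        obtain ⟨z, hz, hSz⟩ := h
        rcases List.mem_cons.mp hz with rfl | hz
        · exact absurd hSz ha
        · exact ⟨z, hz, hSz⟩
      obtain ⟨s, y, e, rfl, hSy, hns⟩ := first_mem_split S l this
      exact ⟨a :: s, y, e, rfl, hSy, by
        intro z hz
        rcases List.mem_cons.mp hz with rfl | hz
        · exact ha
        · exact hns z hz⟩


/-- If `Pv` is a shortest path from `u` to `v` whose first vertex
after `u` is `x`, and some shortest path `Pw` from `u` to `t` shares a vertex other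
than `u` with `Pv`, then there is a shortest path from `u` to `t` containing `x`. -/
theorem shortest_path_through_first_vertex
    {V : Type*} (A : V → V → Prop) (w : V → V → ℝ)
    (hw : ∀ x y, A x y → 0 ≤ w x y)
    (u v t : V) (huv : u ≠ v) (hut : u ≠ t) (hvt : v ≠ t)
    (Pv : List V) (hPv : IsShortestDiPath A w u v Pv)
    (x : V) (hx : Pv.tail.head? = some x)
    (Pw : List V) (hPw : IsShortestDiPath A w u t Pw)
    (y : V) (hyPv : y ∈ Pv) (hyPw : y ∈ Pw) (hyu : y ≠ u) :
    ∃ Pw', IsShortestDiPath A w u t Pw' ∧ x ∈ Pw' := by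
  obtain ⟨⟨hPvh, hPvl, hPvc, hPvnd⟩, hPvmin⟩ := hPv
  obtain ⟨⟨hPwh, hPwl, hPwc, hPwnd⟩, hPwmin⟩ := hPw
  -- Pv = u :: pv'
  obtain ⟨pv', rfl⟩ : ∃ pv', Pv = u :: pv' := by
    cases Pv with
    | nil => simp at hPvh
    | cons a l => simp at hPvh; exact ⟨l, by rw [hPvh]⟩
  obtain ⟨pw', rfl⟩ : ∃ pw', Pw = u :: pw' := by
    cases Pw with
    | nil => simp at hPwh
    | cons a l => simp at hPwh; exact ⟨l, by rw [hPwh]⟩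
  have hy' : y ∈ pv' := by
    rcases List.mem_cons.mp hyPv with rfl | h
    · exact absurd rfl hyu
    · exact h
  -- first vertex of pv' that lies on Pw
  obtain ⟨s, y₀, e, rfl, hy₀Pw, hsdisj⟩ :=
    first_mem_split (fun z => z ∈ u :: pw') pv' ⟨y, hy', hyPw⟩
  have hupv' : u ∉ s ++ y₀ :: e := (List.nodup_cons.mp hPvnd).1
  have hy₀u : y₀ ≠ u := by
    intro h; exact hupv' (by simp [h.symm])
  have hy₀pw' : y₀ ∈ pw' := by
    rcases List.mem_cons.mp hy₀Pw with h | h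
    · exact absurd h hy₀u
    · exact h
  obtain ⟨r, R2, rfl⟩ := List.append_of_mem hy₀pw'
  have hupw' : u ∉ r ++ y₀ :: R2 := (List.nodup_cons.mp hPwnd).1
  -- key sublists and their chain properties
  have hPveq : u :: (s ++ y₀ :: e) = ((u :: s) ++ [y₀]) ++ e := by simp
  have hPweq : u :: (r ++ y₀ :: R2) = ((u :: r) ++ [y₀]) ++ R2 := by simp
  have hcv1 : List.Chain' A ((u :: s) ++ [y₀]) := hPvc.prefix ⟨e, by simp⟩
  have hcv2 : List.Chain' A (y₀ :: e) := hPvc.suffix ⟨u :: s, by simp⟩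
  have hcw1 : List.Chain' A ((u :: r) ++ [y₀]) := hPwc.prefix ⟨R2, by simp⟩
  have hcw2 : List.Chain' A (y₀ :: R2) := hPwc.suffix ⟨u :: r, by simp⟩
  -- last vertices
  have hlastv : (y₀ :: e).getLast? = some v := by
    rw [show (u :: (s ++ y₀ :: e)) = (u :: s) ++ y₀ :: e from by simp,
      getLast?_append_cons] at hPvl
    exact hPvl
  have hlastw : (y₀ :: R2).getLast? = some t := by
    rw [show (u :: (r ++ y₀ :: R2)) = (u :: r) ++ y₀ :: R2 from by simp,
      getLast?_append_cons] at hPwl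
    exact hPwl
  -- the candidate path W
  set W : List V := (u :: s) ++ y₀ :: R2 with hWdef
  have hWchain : List.Chain' A W := chain'_glue hcv1 hcw2
  have hWhead : W.head? = some u := rfl
  have hWlast : W.getLast? = some t := by
    rw [hWdef, getLast?_append_cons]; exact hlastw
  have hWnd : W.Nodup := by
    rw [hWdef, List.nodup_append']
    refine ⟨?_, ?_, ?_⟩
    · have h : ((u :: s) ++ [y₀] ++ e).Nodup := by
        rw [show (u :: s) ++ [y₀] ++ e = u :: (s ++ y₀ :: e) from by simp]
        exact hPvnd
      exact (List.Nodup.of_append_left (List.Nodup.of_append_left h))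
    · have : (u :: r) ++ (y₀ :: R2) = u :: (r ++ y₀ :: R2) := by simp
      exact (List.nodup_append'.mp (this ▸ hPwnd : ((u :: r) ++ (y₀ :: R2)).Nodup)).2.1
    · intro z hz hz2
      rcases List.mem_cons.mp hz with rfl | hzs
      · rcases List.mem_cons.mp hz2 with h | h
        · exact hy₀u h.symm
        · exact hupw' (List.mem_append.mpr (Or.inr (List.mem_cons.mpr (Or.inr h))))
      · refine hsdisj z hzs ?_
        rcases List.mem_cons.mp hz2 with rfl | h
        · exact List.mem_cons.mpr (Or.inr hy₀pw')
        · exact List.mem_cons.mpr (Or.inr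
            (List.mem_append.mpr (Or.inr (List.mem_cons.mpr (Or.inr h)))))
  -- the detour walk from u to v through Pw's prefix
  have hWvchain : List.Chain' A ((u :: r) ++ y₀ :: e) := chain'_glue hcw1 hcv2
  obtain ⟨q, hq1, hq2, hq3, hq4, hq5⟩ :=
    loop_erase hw ((u :: r) ++ y₀ :: e).length ((u :: r) ++ y₀ :: e) (le_refl _) hWvchain
  have hqpath : IsDiPath A u v q := by
    refine ⟨?_, ?_, hq3, hq4⟩
    · rw [hq1]; rfl
    · rw [hq2, getLast?_append_cons]; exact hlastv
  have hkey : pathWeight w ((u :: s) ++ [y₀]) ≤ pathWeight w ((u :: r) ++ [y₀]) := by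
    have h1 := hPvmin q hqpath
    have h2 : pathWeight w (u :: (s ++ y₀ :: e)) =
        pathWeight w ((u :: s) ++ [y₀]) + pathWeight w (y₀ :: e) :=
      pathWeight_split w y₀ (u :: s) e
    have h3 : pathWeight w ((u :: r) ++ y₀ :: e) =
        pathWeight w ((u :: r) ++ [y₀]) + pathWeight w (y₀ :: e) :=
      pathWeight_split w y₀ (u :: r) e
    have : pathWeight w (u :: (s ++ y₀ :: e)) ≤ pathWeight w ((u :: r) ++ y₀ :: e) :=
      le_trans h1 hq5
    rw [h2, h3] at this
    linarith
  have hWweight : pathWeight w W ≤ pathWeight w (u :: (r ++ y₀ :: R2)) := by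
    have h4 : pathWeight w W =
        pathWeight w ((u :: s) ++ [y₀]) + pathWeight w (y₀ :: R2) :=
      pathWeight_split w y₀ (u :: s) R2
    have h5 : pathWeight w (u :: (r ++ y₀ :: R2)) =
        pathWeight w ((u :: r) ++ [y₀]) + pathWeight w (y₀ :: R2) :=
      pathWeight_split w y₀ (u :: r) R2
    rw [h4, h5]
    linarith
  have hWshort : IsShortestDiPath A w u t W := by
    refine ⟨⟨hWhead, hWlast, hWchain, hWnd⟩, fun q hq => ?_⟩
    exact le_trans hWweight (hPwmin q hq)
  -- x ∈ W
  have hxW : x ∈ W := by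
    have : (s ++ y₀ :: e).head? = some x := hx
    rw [List.head?_append] at this
    cases s with
    | nil =>
      simp at this
      rw [hWdef, this]
      simp
    | cons a s' =>
      simp at this
      rw [hWdef, ← this]
      simp
  exact ⟨W, hWshort, hxW⟩
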